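/- (Proposition 4) Assume the p=3 parasupersymmetry algebra. If Ψ₁ and Ψ₂ are simultaneous eigenvectors of S and Ψ₁ ∉ F(Ψ₂), then F(Ψ₁) ∩ F(Ψ₂) = {0}. -/

import Mathlib

open ContinuousLinearMap

/-- The set `S` of nine operators `{H, QQ†, Q†Q, Q²Q†², Q†²Q², QQ†²Q, Q†Q²Q†, QQ†QQ†, Q†QQ†Q}`. -/
def opSetS {𝓗 : Type*} [NormedAddCommGroup 𝓗] [InnerProductSpace ℂ 𝓗] [CompleteSpace 𝓗]
    (Q H : 𝓗 →L[ℂ] 𝓗) : Set (𝓗 →L[ℂ] 𝓗) :=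
  {H, Q * adjoint Q, adjoint Q * Q,
    Q ^ 2 * (adjoint Q) ^ 2, (adjoint Q) ^ 2 * Q ^ 2,
    Q * (adjoint Q) ^ 2 * Q, adjoint Q * Q ^ 2 * adjoint Q,
    Q * adjoint Q * Q * adjoint Q, adjoint Q * Q * adjoint Q * Q}

/-- `Ψ` is a simultaneous eigenvector of the nine operators in `S`. -/
def IsSimulEig {𝓗 : Type*} [NormedAddCommGroup 𝓗] [InnerProductSpace ℂ 𝓗] [CompleteSpace 𝓗]
    (Q H : 𝓗 →L[ℂ] 𝓗) (Ψ : 𝓗) : Prop :=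
  Ψ ≠ 0 ∧ ∀ A ∈ opSetS Q H, ∃ μ : ℂ, A Ψ = μ • Ψ

/-- The family `F(Ψ)`: the smallest linear subspace of `𝓗` containing `Ψ` and invariant
under both `Q` and `Q†`. -/
def family {𝓗 : Type*} [NormedAddCommGroup 𝓗] [InnerProductSpace ℂ 𝓗] [CompleteSpace 𝓗]
    (Q : 𝓗 →L[ℂ] 𝓗) (Ψ : 𝓗) : Submodule ℂ 𝓗 :=
  sInf {p : Submodule ℂ 𝓗 | Ψ ∈ p ∧ (∀ x ∈ p, Q x ∈ p) ∧ ∀ x ∈ p, adjoint Q x ∈ p}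

namespace Stmt8Aux

variable {𝓗 : Type*} [NormedAddCommGroup 𝓗] [InnerProductSpace ℂ 𝓗] [CompleteSpace 𝓗]

local notation "⟪" x ", " y "⟫" => @inner ℂ _ _ x y

private lemma ladder_aux (Q s H : 𝓗 →L[ℂ] 𝓗)
    (hs : adjoint Q = s)
    (hii : Q ^ 3 * s + Q ^ 2 * s * Q + Q * s * Q ^ 2 + s * Q ^ 3 = 6 * (Q ^ 2 * H))
    (hiii : Q * s ^ 2 * Q = s * Q ^ 2 * s)
    (Ψ : 𝓗) (hΨ : Ψ ≠ 0)
    (E α β δ : ℂ)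
    (hE : H Ψ = E • Ψ) (hα : Q (s Ψ) = α • Ψ) (hβ : s (Q Ψ) = β • Ψ)
    (hδ : s (s (Q (Q Ψ))) = δ • Ψ) :
    (∃ μ : ℂ, s (Q (Q Ψ)) = μ • Q Ψ ∧ (Q (Q Ψ) ≠ 0 → μ ≠ 0)) ∧
    (∃ μ : ℂ, s (Q (Q (Q Ψ))) = μ • Q (Q Ψ) ∧ (Q (Q (Q Ψ)) ≠ 0 → μ ≠ 0)) := by
  have mv1 : ∀ x y : 𝓗, ⟪x, s y⟫ = ⟪Q x, y⟫ := by
    intro x y; rw [← hs]; exact adjoint_inner_right Q x y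
  have mv2 : ∀ x y : 𝓗, ⟪s x, y⟫ = ⟪x, Q y⟫ := by
    intro x y; rw [← hs]; exact adjoint_inner_left Q y x
  set N : ℂ := ⟪Ψ, Ψ⟫ with hNdef
  have hN : N ≠ 0 := fun h => hΨ (inner_self_eq_zero.mp h)
  have hNreal : (starRingEnd ℂ) N = N := inner_conj_symm Ψ Ψ
  have P1 : β * N = ⟪Q Ψ, Q Ψ⟫ := by
    calc β * N = ⟪Ψ, β • Ψ⟫ := by rw [inner_smul_right]
    _ = ⟪Ψ, s (Q Ψ)⟫ := by rw [hβ]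
    _ = ⟪Q Ψ, Q Ψ⟫ := mv1 _ _
  have P2 : δ * N = ⟪Q (Q Ψ), Q (Q Ψ)⟫ := by
    calc δ * N = ⟪Ψ, δ • Ψ⟫ := by rw [inner_smul_right]
    _ = ⟪Ψ, s (s (Q (Q Ψ)))⟫ := by rw [hδ]
    _ = ⟪Q Ψ, s (Q (Q Ψ))⟫ := mv1 _ _
    _ = ⟪Q (Q Ψ), Q (Q Ψ)⟫ := mv1 _ _
  have hβreal : (starRingEnd ℂ) β = β := by
    have h1 : (starRingEnd ℂ) (β * N) = β * N := by
      rw [P1]; exact inner_conj_symm _ _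
    rw [map_mul, hNreal] at h1
    exact mul_right_cancel₀ hN h1
  have L2 : ∃ μ : ℂ, s (Q (Q Ψ)) = μ • Q Ψ ∧ (Q (Q Ψ) ≠ 0 → μ ≠ 0) := by
    by_cases hQ2 : Q (Q Ψ) = 0
    · exact ⟨0, by rw [hQ2, map_zero, zero_smul], fun h => absurd hQ2 h⟩
    · have hQ1 : Q Ψ ≠ 0 := fun h => hQ2 (by rw [h, map_zero])
      have hβ0 : β ≠ 0 := by
        intro h0
        rw [h0, zero_mul] at P1
        exact hQ1 (inner_self_eq_zero.mp P1.symm)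
      have hδ0 : δ ≠ 0 := by
        intro h0
        rw [h0, zero_mul] at P2
        exact hQ2 (inner_self_eq_zero.mp P2.symm)
      set x : 𝓗 := s (Q (Q Ψ)) with hxdef
      have h3 := ContinuousLinearMap.ext_iff.mp hiii x
      simp only [mul_apply_eq_comp, pow_succ, pow_zero, one_apply_eq_self] at h3
      have hsx : s x = δ • Ψ := hδ
      have lhs3 : ⟪Q Ψ, Q (s (s (Q x)))⟫ = (starRingEnd ℂ) β * ⟪x, x⟫ := by
        calc ⟪Q Ψ, Q (s (s (Q x)))⟫ = ⟪s (Q Ψ), s (s (Q x))⟫ := by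
              rw [← mv2]
        _ = (starRingEnd ℂ) β * ⟪Ψ, s (s (Q x))⟫ := by rw [hβ, inner_smul_left]
        _ = (starRingEnd ℂ) β * ⟪Q Ψ, s (Q x)⟫ := by rw [mv1]
        _ = (starRingEnd ℂ) β * ⟪Q (Q Ψ), Q x⟫ := by rw [mv1]
        _ = (starRingEnd ℂ) β * ⟪x, x⟫ := by rw [← mv2]
      have rhs3 : ⟪Q Ψ, s (Q (Q (s x)))⟫ = δ * (δ * N) := by
        calc ⟪Q Ψ, s (Q (Q (s x)))⟫ = ⟪Q Ψ, s (Q (Q (δ • Ψ)))⟫ := by rw [hsx]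
        _ = δ * ⟪Q Ψ, s (Q (Q Ψ))⟫ := by rw [map_smul, map_smul, map_smul, inner_smul_right]
        _ = δ * ⟪Q (Q Ψ), Q (Q Ψ)⟫ := by rw [mv1]
        _ = δ * (δ * N) := by rw [← P2]
      have P3 : β * ⟪x, x⟫ = δ * (δ * N) := by
        rw [← hβreal, ← lhs3, h3, rhs3]
      set μ : ℂ := δ / β with hμdef
      have hμβ : μ * β = δ := div_mul_cancel₀ δ hβ0
      have hxq : ⟪x, Q Ψ⟫ = δ * N := by
        rw [hxdef, mv2, ← P2]
      have hqx : ⟪Q Ψ, x⟫ = δ * N := by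
        rw [hxdef, mv1, ← P2]
      set w : 𝓗 := x - μ • Q Ψ with hwdef
      have hqw : ⟪Q Ψ, w⟫ = 0 := by
        rw [hwdef, inner_sub_right, inner_smul_right, hqx, ← P1, hμdef]
        field_simp
        ring
      have hxw : ⟪x, w⟫ = 0 := by
        have h1 : β * ⟪x, w⟫ = 0 := by
          rw [hwdef, inner_sub_right, inner_smul_right, hxq, mul_sub, P3, hμdef]
          field_simp
          ring
        exact (mul_eq_zero.mp h1).resolve_left hβ0
      have hww : ⟪w, w⟫ = 0 := by
        rw [hwdef, inner_sub_left, inner_smul_left, ← hwdef, hqw, hxw, mul_zero, sub_zero]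
      have hw0 : w = 0 := inner_self_eq_zero.mp hww
      refine ⟨μ, ?_, fun _ => div_ne_zero hδ0 hβ0⟩
      rw [← sub_eq_zero]; exact hw0
  obtain ⟨μ₂, hμ₂, hμ₂0⟩ := L2
  refine ⟨⟨μ₂, hμ₂, hμ₂0⟩, ?_⟩
  by_cases hQ3 : Q (Q (Q Ψ)) = 0
  · exact ⟨0, by rw [hQ3, map_zero, zero_smul], fun h => absurd hQ3 h⟩
  · have hQ2 : Q (Q Ψ) ≠ 0 := fun h => hQ3 (by rw [h, map_zero])
    have hδ0 : δ ≠ 0 := by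
      intro h0
      rw [h0, zero_mul] at P2
      exact hQ2 (inner_self_eq_zero.mp P2.symm)
    have h := ContinuousLinearMap.ext_iff.mp hii Ψ
    simp only [add_apply, mul_apply_eq_comp, pow_succ, pow_zero, one_apply_eq_self] at h
    have ht1 : Q (Q (Q (s Ψ))) = α • Q (Q Ψ) := by
      rw [hα, map_smul, map_smul]
    have ht2 : Q (Q (s (Q Ψ))) = β • Q (Q Ψ) := by
      rw [hβ, map_smul, map_smul]
    have ht3 : Q (s (Q (Q Ψ))) = μ₂ • Q (Q Ψ) := by
      rw [hμ₂, map_smul]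
    have ht4 : Q (Q (H Ψ)) = E • Q (Q Ψ) := by
      rw [hE, map_smul, map_smul]
    rw [ht1, ht2, ht3, ht4] at h
    have h' : s (Q (Q (Q Ψ))) = ((6:ℂ) * E - α - β - μ₂) • Q (Q Ψ) := by
      have h6 : (6 : 𝓗 →L[ℂ] 𝓗) (E • Q (Q Ψ)) = ((6:ℂ) * E) • Q (Q Ψ) := by
        norm_num
        module
      rw [h6] at h
      have h8 : s (Q (Q (Q Ψ))) = ((6:ℂ) * E) • Q (Q Ψ)
          - (α • Q (Q Ψ) + β • Q (Q Ψ) + μ₂ • Q (Q Ψ)) := by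
        rw [← h]; abel
      rw [h8]; module
    refine ⟨(6:ℂ) * E - α - β - μ₂, h', fun _ => ?_⟩
    have hu : ⟪Q (Q Ψ), s (Q (Q (Q Ψ)))⟫ = ⟪Q (Q (Q Ψ)), Q (Q (Q Ψ))⟫ := mv1 _ _
    have hu0 : ⟪Q (Q (Q Ψ)), Q (Q (Q Ψ))⟫ ≠ 0 := fun hh => hQ3 (inner_self_eq_zero.mp hh)
    intro hμ30
    rw [h', inner_smul_right, hμ30, zero_mul] at hu
    exact hu0 hu.symm

end Stmt8Aux

set_option maxHeartbeats 1000000 in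
open Stmt8Aux in
/-- Proposition 4: Assuming the p=3 parasupersymmetry algebra, if `Ψ₁` and
`Ψ₂` are simultaneous eigenvectors of `S` and `Ψ₁ ∉ F(Ψ₂)`, then `F(Ψ₁) ∩ F(Ψ₂) = {0}`. -/
theorem stmt8 {𝓗 : Type*} [NormedAddCommGroup 𝓗] [InnerProductSpace ℂ 𝓗] [CompleteSpace 𝓗]
    (Q H : 𝓗 →L[ℂ] 𝓗) (hH : IsSelfAdjoint H)
    (hQH : Q * H = H * Q) (hQdH : adjoint Q * H = H * adjoint Q)
    (hii : Q ^ 3 * adjoint Q + Q ^ 2 * adjoint Q * Q + Q * adjoint Q * Q ^ 2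
      + adjoint Q * Q ^ 3 = 6 * (Q ^ 2 * H))
    (hiii : Q * (adjoint Q) ^ 2 * Q = adjoint Q * Q ^ 2 * adjoint Q)
    (hiv : (adjoint Q) ^ 3 * Q + (adjoint Q) ^ 2 * Q * adjoint Q
      + adjoint Q * Q * (adjoint Q) ^ 2 + Q * (adjoint Q) ^ 3 = 6 * ((adjoint Q) ^ 2 * H))
    (hQ4 : Q ^ 4 = 0) (hQd4 : (adjoint Q) ^ 4 = 0)
    (Ψ₁ Ψ₂ : 𝓗) (hΨ₁ : IsSimulEig Q H Ψ₁) (hΨ₂ : IsSimulEig Q H Ψ₂)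
    (hnot : Ψ₁ ∉ family Q Ψ₂) :
    family Q Ψ₁ ⊓ family Q Ψ₂ = ⊥ := by
  classical
  obtain ⟨hne, heig⟩ := hΨ₁
  -- extract the eigenvalues we need
  obtain ⟨E₁, hE₁⟩ := heig H (Set.mem_insert _ _)
  obtain ⟨a₁, ha₁'⟩ := heig (Q * adjoint Q)
    (Set.mem_insert_of_mem _ (Set.mem_insert _ _))
  obtain ⟨b₁, hb₁'⟩ := heig (adjoint Q * Q)
    (Set.mem_insert_of_mem _ (Set.mem_insert_of_mem _ (Set.mem_insert _ _)))
  obtain ⟨c₁, hc₁'⟩ := heig (Q ^ 2 * (adjoint Q) ^ 2)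
    (Set.mem_insert_of_mem _ (Set.mem_insert_of_mem _ (Set.mem_insert_of_mem _
      (Set.mem_insert _ _))))
  obtain ⟨d₁, hd₁'⟩ := heig ((adjoint Q) ^ 2 * Q ^ 2)
    (Set.mem_insert_of_mem _ (Set.mem_insert_of_mem _ (Set.mem_insert_of_mem _
      (Set.mem_insert_of_mem _ (Set.mem_insert _ _)))))
  have ha₁ : Q (adjoint Q Ψ₁) = a₁ • Ψ₁ := by
    simpa only [mul_apply_eq_comp] using ha₁'
  have hb₁ : adjoint Q (Q Ψ₁) = b₁ • Ψ₁ := by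
    simpa only [mul_apply_eq_comp] using hb₁'
  have hc₁ : Q (Q (adjoint Q (adjoint Q Ψ₁))) = c₁ • Ψ₁ := by
    simpa only [mul_apply_eq_comp, pow_succ, pow_zero, one_apply_eq_self] using hc₁'
  have hd₁ : adjoint Q (adjoint Q (Q (Q Ψ₁))) = d₁ • Ψ₁ := by
    simpa only [mul_apply_eq_comp, pow_succ, pow_zero, one_apply_eq_self] using hd₁'
  -- the two ladder lemmas
  have lad1 := ladder_aux Q (adjoint Q) H rfl hii hiii Ψ₁ hne E₁ a₁ b₁ d₁ hE₁ ha₁ hb₁ hd₁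
  have lad2 := ladder_aux (adjoint Q) Q H (adjoint_adjoint Q) hiv hiii.symm Ψ₁ hne
    E₁ b₁ a₁ c₁ hE₁ hb₁ ha₁ hc₁
  -- nonvanishing of a₁, b₁ when the corresponding vectors are nonzero
  have hNne : (inner ℂ Ψ₁ Ψ₁ : ℂ) ≠ 0 := fun h => hne (inner_self_eq_zero.mp h)
  have ha0 : adjoint Q Ψ₁ ≠ 0 → a₁ ≠ 0 := by
    intro hvne h0
    have : a₁ * (inner ℂ Ψ₁ Ψ₁ : ℂ) = inner ℂ (adjoint Q Ψ₁) (adjoint Q Ψ₁) := by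
      calc a₁ * (inner ℂ Ψ₁ Ψ₁ : ℂ) = inner ℂ Ψ₁ (a₁ • Ψ₁) := by rw [inner_smul_right]
      _ = inner ℂ Ψ₁ (Q (adjoint Q Ψ₁)) := by rw [ha₁]
      _ = inner ℂ (adjoint Q Ψ₁) (adjoint Q Ψ₁) := (adjoint_inner_left Q (adjoint Q Ψ₁) Ψ₁).symm
    rw [h0, zero_mul] at this
    exact hvne (inner_self_eq_zero.mp this.symm)
  have hb0 : Q Ψ₁ ≠ 0 → b₁ ≠ 0 := by
    intro hvne h0
    have : b₁ * (inner ℂ Ψ₁ Ψ₁ : ℂ) = inner ℂ (Q Ψ₁) (Q Ψ₁) := by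
      calc b₁ * (inner ℂ Ψ₁ Ψ₁ : ℂ) = inner ℂ Ψ₁ (b₁ • Ψ₁) := by rw [inner_smul_right]
      _ = inner ℂ Ψ₁ (adjoint Q (Q Ψ₁)) := by rw [hb₁]
      _ = inner ℂ (Q Ψ₁) (Q Ψ₁) := adjoint_inner_right Q Ψ₁ (Q Ψ₁)
    rw [h0, zero_mul] at this
    exact hvne (inner_self_eq_zero.mp this.symm)
  -- the ladder of vectors
  set v : ℤ → 𝓗 := fun k => if 0 ≤ k then (Q ^ k.toNat) Ψ₁ else ((adjoint Q) ^ (-k).toNat) Ψ₁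
    with hvdef
  have hvpos : ∀ k : ℤ, 0 ≤ k → v k = (Q ^ k.toNat) Ψ₁ := by
    intro k hk; simp only [hvdef, if_pos hk]
  have hvneg : ∀ k : ℤ, k ≤ 0 → v k = ((adjoint Q) ^ (-k).toNat) Ψ₁ := by
    intro k hk
    rcases eq_or_lt_of_le hk with rfl | hk'
    · simp [hvdef]
    · simp only [hvdef, if_neg (by omega : ¬ (0:ℤ) ≤ k)]
  have hv0 : v 0 = Ψ₁ := by simp [hvdef]
  have hvQ : ∀ k : ℤ, 0 ≤ k → v (k + 1) = Q (v k) := by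
    intro k hk
    rw [hvpos k hk, hvpos (k+1) (by omega),
      show (k+1).toNat = k.toNat + 1 from by omega, pow_succ']
    exact mul_apply_eq_comp _ _ _
  have hvS : ∀ k : ℤ, k ≤ 0 → v (k - 1) = adjoint Q (v k) := by
    intro k hk
    rw [hvneg k hk, hvneg (k-1) (by omega),
      show (-(k-1)).toNat = (-k).toNat + 1 from by omega, pow_succ']
    exact mul_apply_eq_comp _ _ _
  have hv1 : v 1 = Q Ψ₁ := by
    have h := hvQ 0 le_rfl; rw [hv0] at h; simpa using h
  have hv2 : v 2 = Q (Q Ψ₁) := by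
    have h := hvQ 1 (by norm_num); rw [hv1] at h; simpa using h
  have hv3 : v 3 = Q (Q (Q Ψ₁)) := by
    have h := hvQ 2 (by norm_num); rw [hv2] at h; simpa using h
  have hvm1 : v (-1) = adjoint Q Ψ₁ := by
    have h := hvS 0 le_rfl; rw [hv0] at h; simpa using h
  have hvm2 : v (-2) = adjoint Q (adjoint Q Ψ₁) := by
    have h := hvS (-1) (by norm_num); rw [hvm1] at h
    simpa using h
  have hvm3 : v (-3) = adjoint Q (adjoint Q (adjoint Q Ψ₁)) := by
    have h := hvS (-2) (by norm_num); rw [hvm2] at h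
    simpa using h
  have hv4 : ∀ k : ℤ, 4 ≤ k → v k = 0 := by
    intro k hk
    rw [hvpos k (by omega), show k.toNat = (k.toNat - 4) + 4 from by omega, pow_add,
      mul_apply_eq_comp, hQ4, zero_apply, map_zero]
  have hv4' : ∀ k : ℤ, k ≤ -4 → v k = 0 := by
    intro k hk
    rw [hvneg k (by omega), show (-k).toNat = ((-k).toNat - 4) + 4 from by omega, pow_add,
      mul_apply_eq_comp, hQd4, zero_apply, map_zero]
  -- raising with controlled scalars
  have hQρ : ∀ k : ℤ, ∃ r : ℂ, Q (v k) = r • v (k + 1) ∧ (v k ≠ 0 → v (k + 1) ≠ 0 → r ≠ 0) := by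
    intro k
    rcases le_or_gt 0 k with hk | hk
    · exact ⟨1, by rw [hvQ k hk, one_smul], fun _ _ => one_ne_zero⟩
    · by_cases h1 : k = -1
      · subst h1
        refine ⟨a₁, ?_, fun hvk _ => ha0 (by rwa [hvm1] at hvk)⟩
        rw [hvm1, show (-1:ℤ) + 1 = 0 from by ring, hv0, ha₁]
      · by_cases h2 : k = -2
        · subst h2
          obtain ⟨μ, hμ, hμ0⟩ := lad2.1
          refine ⟨μ, ?_, fun hvk _ => hμ0 (by rwa [hvm2] at hvk)⟩
          rw [hvm2, show (-2:ℤ) + 1 = -1 from by ring, hvm1, hμ]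
        · by_cases h3 : k = -3
          · subst h3
            obtain ⟨μ, hμ, hμ0⟩ := lad2.2
            refine ⟨μ, ?_, fun hvk _ => hμ0 (by rwa [hvm3] at hvk)⟩
            rw [hvm3, show (-3:ℤ) + 1 = -2 from by ring, hvm2, hμ]
          · refine ⟨0, ?_, fun hvk _ => absurd (hv4' k (by omega)) hvk⟩
            rw [hv4' k (by omega), map_zero, zero_smul]
  -- lowering with controlled scalars
  have hSρ : ∀ k : ℤ, ∃ l : ℂ, adjoint Q (v k) = l • v (k - 1) ∧ (0 < k → v k ≠ 0 → l ≠ 0) := by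
    intro k
    rcases le_or_gt k 0 with hk | hk
    · exact ⟨1, by rw [hvS k hk, one_smul], fun h _ => one_ne_zero⟩
    · by_cases h1 : k = 1
      · subst h1
        refine ⟨b₁, ?_, fun _ hvk => hb0 (by rwa [hv1] at hvk)⟩
        rw [hv1, show (1:ℤ) - 1 = 0 from by ring, hv0, hb₁]
      · by_cases h2 : k = 2
        · subst h2
          obtain ⟨μ, hμ, hμ0⟩ := lad1.1
          refine ⟨μ, ?_, fun _ hvk => hμ0 (by rwa [hv2] at hvk)⟩
          rw [hv2, show (2:ℤ) - 1 = 1 from by ring, hv1, hμ]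
        · by_cases h3 : k = 3
          · subst h3
            obtain ⟨μ, hμ, hμ0⟩ := lad1.2
            refine ⟨μ, ?_, fun _ hvk => hμ0 (by rwa [hv3] at hvk)⟩
            rw [hv3, show (3:ℤ) - 1 = 2 from by ring, hv2, hμ]
          · refine ⟨0, ?_, fun _ hvk => absurd (hv4 k (by omega)) hvk⟩
            rw [hv4 k (by omega), map_zero, zero_smul]
  -- once zero going up, always zero
  have hCup : ∀ (n : ℕ) (k : ℤ), 0 ≤ k → v k = 0 → v (k + n) = 0 := by
    intro n
    induction n with
    | zero => intro k _ h; simpa using h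
    | succ n ih =>
      intro k hk h
      have h2 : v (k + n) = 0 := ih k hk h
      have h3 : v (k + n + 1) = Q (v (k + n)) := hvQ _ (by omega)
      have hcast : ((n + 1 : ℕ) : ℤ) = (n : ℤ) + 1 := by push_cast; ring
      rw [hcast, show k + ((n:ℤ) + 1) = k + n + 1 from by ring, h3, h2, map_zero]
  have hCdown : ∀ (n : ℕ) (k : ℤ), k ≤ 0 → v k = 0 → v (k - n) = 0 := by
    intro n
    induction n with
    | zero => intro k _ h; simpa using h
    | succ n ih =>
      intro k hk h
      have h2 : v (k - n) = 0 := ih k hk h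
      have h3 : v (k - n - 1) = adjoint Q (v (k - n)) := hvS _ (by omega)
      have hcast : ((n + 1 : ℕ) : ℤ) = (n : ℤ) + 1 := by push_cast; ring
      rw [hcast, show k - ((n:ℤ) + 1) = k - n - 1 from by ring, h3, h2, map_zero]
  have htopgen : ∀ j : ℤ, 0 ≤ j → v j = 0 → ∀ k, j ≤ k → v k = 0 := by
    intro j hj hvj k hk
    have h := hCup (k - j).toNat j hj hvj
    rwa [show j + (((k - j).toNat : ℕ) : ℤ) = k from by omega] at h
  -- the top of the ladder
  obtain ⟨M, hM0, hMne, hMtop⟩ :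
      ∃ M : ℤ, 0 ≤ M ∧ v M ≠ 0 ∧ ∀ k, M < k → v k = 0 := by
    by_cases h3 : v 3 = 0
    · by_cases h2 : v 2 = 0
      · by_cases h1 : v 1 = 0
        · exact ⟨0, le_rfl, by rw [hv0]; exact hne,
            fun k hk => htopgen 1 (by norm_num) h1 k (by omega)⟩
        · exact ⟨1, by norm_num, h1, fun k hk => htopgen 2 (by norm_num) h2 k (by omega)⟩
      · exact ⟨2, by norm_num, h2, fun k hk => htopgen 3 (by norm_num) h3 k (by omega)⟩
    · exact ⟨3, by norm_num, h3, fun k hk => hv4 k (by omega)⟩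
  -- pushing with powers of Q
  have hPUSH : ∀ (n : ℕ) (k : ℤ), ∃ r : ℂ,
      (Q ^ n) (v k) = r • v (k + n) ∧ (v k ≠ 0 → v (k + n) ≠ 0 → r ≠ 0) := by
    intro n
    induction n with
    | zero => intro k; exact ⟨1, by simp, fun _ _ => one_ne_zero⟩
    | succ n ih =>
      intro k
      obtain ⟨r, hr, hr0⟩ := ih k
      obtain ⟨r₂, hr2, hr20⟩ := hQρ (k + n)
      have hidx : k + ((n + 1 : ℕ) : ℤ) = (k + n) + 1 := by push_cast; ring
      refine ⟨r * r₂, ?_, ?_⟩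
      · rw [hidx, pow_succ', mul_apply_eq_comp, hr, map_smul, hr2, smul_smul]
      · intro hvk hvk1
        rw [hidx] at hvk1
        have hmid : v (k + n) ≠ 0 := by
          intro h0
          rcases le_or_gt 0 (k + (n:ℤ)) with hh | hh
          · exact hvk1 (by rw [hvQ _ hh, h0, map_zero])
          · apply hvk
            have h4 := hCdown n (k + n) (by omega) h0
            rwa [show k + (n:ℤ) - (n:ℤ) = k from by ring] at h4
        exact mul_ne_zero (hr0 hvk hmid) (hr20 hmid hvk1)
  -- linear independence workhorse
  have hIND : ∀ (S : Finset ℤ) (c : ℤ → ℂ),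
      (∑ k ∈ S, c k • v k) = 0 → ∀ k ∈ S, c k • v k = 0 := by
    intro S c hsum
    by_contra hcon
    push_neg at hcon
    obtain ⟨k', hk'S, hk'⟩ := hcon
    set T := S.filter (fun k => c k • v k ≠ 0) with hTdef
    have hTne : T.Nonempty := ⟨k', Finset.mem_filter.mpr ⟨hk'S, hk'⟩⟩
    set k₀ := T.min' hTne with hk₀def
    have hk₀T : k₀ ∈ T := T.min'_mem hTne
    have hk₀S : k₀ ∈ S := (Finset.mem_filter.mp hk₀T).1
    have hk₀ne : c k₀ • v k₀ ≠ 0 := (Finset.mem_filter.mp hk₀T).2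
    have hvk₀ : v k₀ ≠ 0 := fun h => hk₀ne (by rw [h, smul_zero])
    have hck₀ : c k₀ ≠ 0 := fun h => hk₀ne (by rw [h, zero_smul])
    have hk₀M : k₀ ≤ M := by
      by_contra hh
      push_neg at hh
      exact hvk₀ (hMtop _ hh)
    choose r hr hr0 using hPUSH (M - k₀).toNat
    have hidx : ∀ k : ℤ, k + (((M - k₀).toNat : ℕ) : ℤ) = k + (M - k₀) := by
      intro k; rw [Int.toNat_of_nonneg (by omega)]
    have h0 : (Q ^ (M - k₀).toNat) (∑ k ∈ S, c k • v k) = 0 := by rw [hsum, map_zero]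
    rw [map_sum] at h0
    simp only [map_smul] at h0
    have hsingle : ∀ b ∈ S, b ≠ k₀ → c b • (Q ^ (M - k₀).toNat) (v b) = 0 := by
      intro b hbS hbne
      by_cases hbT : b ∈ T
      · have hbgt : k₀ < b := lt_of_le_of_ne (T.min'_le b hbT) (Ne.symm hbne)
        rw [hr b, show v (b + (((M - k₀).toNat : ℕ) : ℤ)) = 0 from ?_, smul_zero, smul_zero]
        apply hMtop
        rw [hidx b]
        omega
      · have hb0 : c b • v b = 0 := by
          by_contra hbb
          exact hbT (Finset.mem_filter.mpr ⟨hbS, hbb⟩)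
        rcases smul_eq_zero.mp hb0 with h | h
        · rw [h, zero_smul]
        · rw [h, map_zero, smul_zero]
    rw [Finset.sum_eq_single k₀ hsingle (fun h => absurd hk₀S h)] at h0
    rw [hr k₀, hidx k₀, show k₀ + (M - k₀) = M from by ring] at h0
    have hrne : r k₀ ≠ 0 := by
      apply hr0 k₀ hvk₀
      rw [hidx k₀, show k₀ + (M - k₀) = M from by ring]
      exact hMne
    rcases smul_eq_zero.mp h0 with h | h
    · exact hck₀ h
    · rcases smul_eq_zero.mp h with h' | h'
      · exact hrne h'
      · exact hMne h'
  -- span of the ladder is Q- and Q†-invariant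
  have hQspan : ∀ x ∈ Submodule.span ℂ (Set.range v), Q x ∈ Submodule.span ℂ (Set.range v) := by
    intro x hx
    induction hx using Submodule.span_induction with
    | mem y h =>
      obtain ⟨k, rfl⟩ := h
      obtain ⟨r, hr, _⟩ := hQρ k
      rw [hr]
      exact Submodule.smul_mem _ _ (Submodule.subset_span ⟨k + 1, rfl⟩)
    | zero => rw [map_zero]; exact Submodule.zero_mem _
    | add y z _ _ hy hz => rw [map_add]; exact Submodule.add_mem _ hy hz
    | smul a y _ hy => rw [map_smul]; exact Submodule.smul_mem _ _ hy
  have hSspan : ∀ x ∈ Submodule.span ℂ (Set.range v),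
      adjoint Q x ∈ Submodule.span ℂ (Set.range v) := by
    intro x hx
    induction hx using Submodule.span_induction with
    | mem y h =>
      obtain ⟨k, rfl⟩ := h
      obtain ⟨l, hl, _⟩ := hSρ k
      rw [hl]
      exact Submodule.smul_mem _ _ (Submodule.subset_span ⟨k - 1, rfl⟩)
    | zero => rw [map_zero]; exact Submodule.zero_mem _
    | add y z _ _ hy hz => rw [map_add]; exact Submodule.add_mem _ hy hz
    | smul a y _ hy => rw [map_smul]; exact Submodule.smul_mem _ _ hy
  have hFle : family Q Ψ₁ ≤ Submodule.span ℂ (Set.range v) := by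
    apply sInf_le
    refine ⟨?_, hQspan, hSspan⟩
    rw [← hv0]; exact Submodule.subset_span ⟨0, rfl⟩
  -- the target family is invariant
  have hPQ : ∀ x ∈ family Q Ψ₂, Q x ∈ family Q Ψ₂ := by
    intro x hx
    exact Submodule.mem_sInf.mpr fun p hp => hp.2.1 x (Submodule.mem_sInf.mp hx p hp)
  have hPs : ∀ x ∈ family Q Ψ₂, adjoint Q x ∈ family Q Ψ₂ := by
    intro x hx
    exact Submodule.mem_sInf.mpr fun p hp => hp.2.2 x (Submodule.mem_sInf.mp hx p hp)
  -- walking down the ladder inside the family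
  have hDOWN : ∀ n : ℕ, v (n:ℤ) ≠ 0 → v (n:ℤ) ∈ family Q Ψ₂ → Ψ₁ ∈ family Q Ψ₂ := by
    intro n
    induction n with
    | zero => intro _ hmem; rwa [show ((0:ℕ):ℤ) = 0 from rfl, hv0] at hmem
    | succ n ih =>
      intro hne' hmem
      have hcast : ((n + 1 : ℕ) : ℤ) = (n : ℤ) + 1 := by push_cast; ring
      rw [hcast] at hne' hmem
      obtain ⟨l, hl, hl0⟩ := hSρ ((n:ℤ) + 1)
      have hlne : l ≠ 0 := hl0 (by omega) hne'
      have hvn : v (n:ℤ) ≠ 0 := by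
        intro h0
        exact hne' (by rw [hvQ (n:ℤ) (by omega), h0, map_zero])
      have hsv : adjoint Q (v ((n:ℤ) + 1)) ∈ family Q Ψ₂ := hPs _ hmem
      rw [hl] at hsv
      have hmem2 : v ((n:ℤ) + 1 - 1) ∈ family Q Ψ₂ := by
        have h5 := Submodule.smul_mem _ l⁻¹ hsv
        rwa [smul_smul, inv_mul_cancel₀ hlne, one_smul] at h5
      rw [show (n:ℤ) + 1 - 1 = (n:ℤ) from by ring] at hmem2
      exact ih hvn hmem2
  -- extraction of the top vector
  have hEXT : ∀ y : 𝓗, y ≠ 0 → Q y = 0 → y ∈ Submodule.span ℂ (Set.range v) →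
      y ∈ family Q Ψ₂ → Ψ₁ ∈ family Q Ψ₂ := by
    intro y hy hQy hyspan hyP
    obtain ⟨c, hc⟩ := Finsupp.mem_span_range_iff_exists_finsupp.mp hyspan
    have hc' : ∑ k ∈ c.support, c k • v k = y := hc
    choose r hr hr0 using hQρ
    have h1 : ∑ k ∈ c.support, (c k * r k) • v (k + 1) = 0 := by
      have h2 : Q (∑ k ∈ c.support, c k • v k) = 0 := by rw [hc', hQy]
      rw [map_sum] at h2
      simp only [map_smul] at h2
      rw [← h2]
      exact Finset.sum_congr rfl fun k _ => by rw [hr k, smul_smul]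
    have h2 : ∑ j ∈ c.support.image (· + 1), (c (j - 1) * r (j - 1)) • v j = 0 := by
      rw [Finset.sum_image (by intro a _ b _ h; exact add_right_cancel h)]
      rw [← h1]
      exact Finset.sum_congr rfl fun k _ => by norm_num
    have h3 := hIND _ _ h2
    have hterm : ∀ k ∈ c.support, k ≠ M → c k • v k = 0 := by
      intro k hk hkM
      by_cases hvk : v k = 0
      · rw [hvk, smul_zero]
      · have hkle : k ≤ M := by
          by_contra hh
          push_neg at hh
          exact hvk (hMtop k hh)
        have hkM' : k < M := lt_of_le_of_ne hkle hkM
        have hvk1 : v (k + 1) ≠ 0 := by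
          rcases le_or_gt (k + 1) 0 with hh | hh
          · intro h0
            apply hvk
            rw [show k = (k + 1) - 1 from by ring, hvS (k + 1) hh, h0, map_zero]
          · intro h0
            exact hMne (htopgen (k + 1) (by omega) h0 M (by omega))
        have h4 := h3 (k + 1) (Finset.mem_image.mpr ⟨k, hk, rfl⟩)
        rw [show k + 1 - 1 = k from by ring] at h4
        have hrk : r k ≠ 0 := hr0 k hvk hvk1
        rcases smul_eq_zero.mp h4 with h | h
        · rcases mul_eq_zero.mp h with h' | h'
          · rw [h', zero_smul]
          · exact absurd h' hrk
        · exact absurd h hvk1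
    have hyM : y = c M • v M := by
      rw [← hc']
      rw [Finset.sum_eq_single M hterm
        (fun hM' => by rw [Finsupp.notMem_support_iff.mp hM', zero_smul])]
    have hcM : c M ≠ 0 := fun h => hy (by rw [hyM, h, zero_smul])
    have hvMP : v M ∈ family Q Ψ₂ := by
      have h5 := Submodule.smul_mem _ (c M)⁻¹ hyP
      rw [hyM, smul_smul, inv_mul_cancel₀ hcM, one_smul] at h5
      exact h5
    refine hDOWN M.toNat ?_ ?_
    · rw [Int.toNat_of_nonneg hM0]; exact hMne
    · rw [Int.toNat_of_nonneg hM0]; exact hvMP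
  -- descent on powers of Q
  have hDESC : ∀ (j : ℕ) (y : 𝓗), y ≠ 0 → (Q ^ j) y = 0 →
      y ∈ Submodule.span ℂ (Set.range v) → y ∈ family Q Ψ₂ → Ψ₁ ∈ family Q Ψ₂ := by
    intro j
    induction j with
    | zero => intro y hy h0 _ _; exact absurd (by simpa using h0) hy
    | succ j ih =>
      intro y hy h0 hspan hP
      by_cases hQy : Q y = 0
      · exact hEXT y hy hQy hspan hP
      · rw [pow_succ, mul_apply_eq_comp] at h0
        exact ih (Q y) hQy h0 (hQspan y hspan) (hPQ y hP)
  -- conclusion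
  rw [Submodule.eq_bot_iff]
  intro x hx
  by_contra hx0
  obtain ⟨hx1, hx2⟩ := Submodule.mem_inf.mp hx
  have hxspan := hFle hx1
  have hQ7 : (Q ^ 7) x = 0 := by
    obtain ⟨c, hc⟩ := Finsupp.mem_span_range_iff_exists_finsupp.mp hxspan
    have hc' : ∑ k ∈ c.support, c k • v k = x := hc
    rw [← hc', map_sum]
    apply Finset.sum_eq_zero
    intro k _
    rw [map_smul]
    rcases le_or_gt k (-4) with hk | hk
    · rw [hv4' k hk, map_zero, smul_zero]
    · obtain ⟨r, hr, _⟩ := hPUSH 7 k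
      rw [hr, hv4 (k + ((7:ℕ):ℤ)) (by push_cast; omega), smul_zero, smul_zero]
  exact hnot (hDESC 7 x hx0 hQ7 hxspan hx2)
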